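/- arXiv:2007.03751 — 3 statements merged into one kernel-verified Lean document; each statement's English description precedes it below -/
import Mathlib

section
/- Consider a symmetric network cost-sharing game on a finite graph G with source s, sink t, n players, and nondecreasing concave edge cost functions c_e with c_e(0) = 0. There exists an optimal assignment of players to s-t paths minimizing the total cost Σ_e c_e(ℓ_e) in which all n players use the same s-t path. -/
/-- `p` is a directed path from `s` to `t` in the graph with edge relation `E`. -/
def IsSTPath {V : Type*} (E : V → V → Prop) (s t : V) (p : List V) : Prop :=
  p.Chain' E ∧ p.head? = some s ∧ p.getLast? = some t

/-- The load of edge `e` under the assignment `A` of paths to the `n` players. -/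
def loadOn {V : Type*} [DecidableEq V] {n : ℕ} (A : Fin n → List V) (e : V × V) : ℕ :=
  (Finset.univ.filter fun i : Fin n => e ∈ (A i).zip (A i).tail).card

/-- The total cost of the assignment `A` with edge cost functions `c`. -/
def totalCost {V : Type*} [Fintype V] [DecidableEq V] {n : ℕ}
    (c : V × V → ℕ → ℝ) (A : Fin n → List V) : ℝ :=
  ∑ e : V × V, c e (loadOn A e)

/-- Concave sequences vanishing at 0 satisfy `l * f n ≤ n * f l` for `l ≤ n`. -/
lemma concave_ratio (f : ℕ → ℝ) (h0 : f 0 = 0)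
    (hconc : ∀ m : ℕ, 1 ≤ m → f (m + 1) - f m ≤ f m - f (m - 1))
    {l n : ℕ} (hln : l ≤ n) : (l : ℝ) * f n ≤ (n : ℝ) * f l := by
  rcases Nat.eq_zero_or_pos l with rfl | hl
  · simp [h0]
  set d : ℕ → ℝ := fun k => f (k + 1) - f k with hd
  have hanti : Antitone d := antitone_nat_of_succ_le fun k => by
    have := hconc (k + 1) (Nat.le_add_left 1 k)
    simpa [hd] using this
  have hsum : ∀ k, f k = ∑ i ∈ Finset.range k, d i := fun k => by
    rw [hd, Finset.sum_range_sub f, h0, sub_zero]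
  have h1 : f n - f l = ∑ i ∈ Finset.Ico l n, d i := by
    rw [hsum n, hsum l, Finset.sum_Ico_eq_sub _ hln]
  have h2 : ∑ i ∈ Finset.Ico l n, d i ≤ (n - l) • d (l - 1) := by
    have := Finset.sum_le_card_nsmul (Finset.Ico l n) d (d (l - 1)) (fun i hi => by
      exact hanti (le_trans (Nat.sub_le l 1) (Finset.mem_Ico.mp hi).1))
    simpa [Nat.card_Ico] using this
  have h3 : (l : ℕ) • d (l - 1) ≤ ∑ i ∈ Finset.range l, d i := by
    have := Finset.card_nsmul_le_sum (Finset.range l) d (d (l - 1)) (fun i hi => by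
      have := Finset.mem_range.mp hi
      exact hanti (by omega : i ≤ l - 1))
    simpa using this
  have hA : f n - f l ≤ ((n : ℝ) - l) * d (l - 1) := by
    rw [h1]
    have := h2
    rw [nsmul_eq_mul, Nat.cast_sub hln] at this
    exact this
  have hB : (l : ℝ) * d (l - 1) ≤ f l := by
    rw [hsum l]
    have := h3
    rw [nsmul_eq_mul] at this
    exact this
  have hl0 : (0 : ℝ) ≤ l := Nat.cast_nonneg l
  have hnl : (0 : ℝ) ≤ (n : ℝ) - l := by
    have : (l : ℝ) ≤ n := Nat.cast_le.mpr hln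
    linarith
  nlinarith [mul_le_mul_of_nonneg_left hA hl0, mul_le_mul_of_nonneg_left hB hnl]

/-- In a symmetric network cost-sharing game with nondecreasing concave edge
costs, there is an optimal assignment that routes all players on a single
`s`-`t` path. -/
theorem concave_single_path_optimum
    {V : Type*} [Fintype V] [DecidableEq V] (E : V → V → Prop)
    (s t : V) (c : V × V → ℕ → ℝ)
    (hnonneg : ∀ e n, 0 ≤ c e n) (hzero : ∀ e, c e 0 = 0)
    (hmono : ∀ e, Monotone (c e))
    (hconc : ∀ e, ∀ n : ℕ, 1 ≤ n → c e (n + 1) - c e n ≤ c e n - c e (n - 1))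
    (n : ℕ) (hn : 0 < n)
    (hpath : ∃ p : List V, p.Nodup ∧ IsSTPath E s t p) :
    ∃ A : Fin n → List V,
      (∀ i, (A i).Nodup ∧ IsSTPath E s t (A i)) ∧
      (∀ i j, A i = A j) ∧
      (∀ B : Fin n → List V, (∀ i, (B i).Nodup ∧ IsSTPath E s t (B i)) →
        totalCost c A ≤ totalCost c B) := by
  classical
  obtain ⟨p0, hp0⟩ := hpath
  set S : Set (List V) := {p | p.Nodup ∧ IsSTPath E s t p} with hS
  have hSfin : S.Finite := by
    apply Set.Finite.subset (List.finite_length_le V (Fintype.card V))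
    intro p hp
    exact hp.1.length_le_card
  set F : List V → ℝ := fun p => ∑ e : V × V, if e ∈ p.zip p.tail then c e n else 0 with hF
  obtain ⟨p, hpS, hpmin⟩ := Set.exists_min_image S F hSfin ⟨p0, hp0⟩
  refine ⟨fun _ => p, fun _ => hpS, fun _ _ => rfl, fun B hB => ?_⟩
  -- total cost of the constant assignment
  have hload : ∀ e : V × V, loadOn (fun _ : Fin n => p) e =
      if e ∈ p.zip p.tail then n else 0 := by
    intro e
    unfold loadOn
    split_ifs with h
    · simp [Finset.filter_true_of_mem (fun i _ => h)]
    · simp [h]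
  have hAcost : totalCost c (fun _ : Fin n => p) = F p := by
    unfold totalCost
    apply Finset.sum_congr rfl
    intro e _
    rw [hload e]
    split_ifs <;> simp [hzero]
  -- per-edge load bound
  have hloadle : ∀ e : V × V, loadOn B e ≤ n := fun e => by
    calc loadOn B e ≤ (Finset.univ : Finset (Fin n)).card := Finset.card_filter_le _ _
    _ = n := by simp
  -- key inequality: n * F p ≤ n * totalCost c B
  have step1 : (n : ℝ) * F p ≤ ∑ i : Fin n, F (B i) := by
    have : ∀ i : Fin n, F p ≤ F (B i) := fun i => hpmin (B i) (hB i)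
    calc (n : ℝ) * F p = ∑ _i : Fin n, F p := by
          simp [Finset.sum_const, Finset.card_univ, nsmul_eq_mul]
    _ ≤ ∑ i : Fin n, F (B i) := Finset.sum_le_sum fun i _ => this i
  have step2 : ∑ i : Fin n, F (B i) = ∑ e : V × V, (loadOn B e : ℝ) * c e n := by
    rw [hF]
    rw [Finset.sum_comm]
    apply Finset.sum_congr rfl
    intro e _
    rw [← Finset.sum_filter, Finset.sum_const, nsmul_eq_mul]
    rfl
  have step3 : ∑ e : V × V, (loadOn B e : ℝ) * c e n ≤ (n : ℝ) * totalCost c B := by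
    unfold totalCost
    rw [Finset.mul_sum]
    apply Finset.sum_le_sum
    intro e _
    exact concave_ratio (c e) (hzero e) (hconc e) (hloadle e)
  have hfinal : (n : ℝ) * totalCost c (fun _ : Fin n => p) ≤ (n : ℝ) * totalCost c B := by
    rw [hAcost]
    calc (n : ℝ) * F p ≤ ∑ i : Fin n, F (B i) := step1
    _ = ∑ e : V × V, (loadOn B e : ℝ) * c e n := step2
    _ ≤ (n : ℝ) * totalCost c B := step3
  have hn' : (0 : ℝ) < n := by exact_mod_cast hn
  exact le_of_mul_le_mul_left hfinal hn'
end

section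
/- Let c_1,...,c_k : ℕ → ℝ be functions. Given r ∈ ℕ and an upper bound N on loads, define ĉ_i(ℓ) = ⌈c_i(ℓ)·10^r⌉·10^{−r} + N!·10^{−(r+N!·i)}. Then for any two distinct nonempty subsets S ≠ T of {1,...,k} and any load assignments ℓ, ℓ' with values in {1,...,N}, we have Σ_{i∈S} ĉ_i(ℓ_i) ≠ Σ_{i∈T} ĉ'_i(ℓ'_i) whenever the index sets S, T differ, and the total increase of each ĉ_i over c_i is at most 10^{−r} + N!·10^{−(r+N!)}. -/
lemma geom_bound (b d n : ℕ) (hb : 1 ≤ b) (hd : d ≤ b - 1) :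
    ∑ j ∈ Finset.range n, d * b ^ j ≤ b ^ n - 1 := by
  have hbn : 1 ≤ b ^ n := Nat.one_le_pow _ _ hb
  have hZ : ((∑ j ∈ Finset.range n, d * b ^ j : ℕ) : ℤ) ≤ (b : ℤ) ^ n - 1 := by
    push_cast
    rw [← Finset.mul_sum]
    calc (d : ℤ) * ∑ j ∈ Finset.range n, (b : ℤ) ^ j
        ≤ ((b : ℤ) - 1) * ∑ j ∈ Finset.range n, (b : ℤ) ^ j := by
          apply mul_le_mul_of_nonneg_right
          · have : (d : ℤ) ≤ (b : ℤ) - 1 := by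
              have hdb : (d : ℤ) ≤ ((b - 1 : ℕ) : ℤ) := by exact_mod_cast hd
              have : ((b - 1 : ℕ) : ℤ) = (b : ℤ) - 1 := by
                have : 1 ≤ b := hb; push_cast [this]; ring
              omega
            exact this
          · apply Finset.sum_nonneg; intro j _; positivity
      _ = (b : ℤ) ^ n - 1 := by
          rw [mul_comm, geom_sum_mul]
  have h1 : ((b ^ n - 1 : ℕ) : ℤ) = (b : ℤ) ^ n - 1 := by push_cast [hbn]; ring
  omega

lemma digit_inj (b d : ℕ) (hd : 0 < d) (hdb : d < b) (A B : Finset ℕ)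
    (h : ∑ j ∈ A, d * b ^ j = ∑ j ∈ B, d * b ^ j) : A = B := by
  have hb2 : 2 ≤ b := by omega
  apply Finset.geomSum_injective hb2
  simp only
  have hA : ∑ j ∈ A, d * b ^ j = d * ∑ j ∈ A, b ^ j := by rw [Finset.mul_sum]
  have hB : ∑ j ∈ B, d * b ^ j = d * ∑ j ∈ B, b ^ j := by rw [Finset.mul_sum]
  rw [hA, hB] at h
  exact Nat.eq_of_mul_eq_mul_left hd h

/-- Tie-breaking perturbation: rounding each cost up to `r` decimal places and
adding `N! * 10 ^ (-(r + N! * i))` to the `i`-th cost function guarantees that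
sums of perturbed costs over two different index sets are never equal, while
each cost increases by at most `10⁻ʳ + N! * 10^{-(r+N!)}`. -/
theorem tie_breaking_perturbation
    (k r N : ℕ) (hN : 0 < N) (c : Fin k → ℕ → ℝ)
    (hc : ∀ i ℓ, 0 ≤ c i ℓ) :
    let chat : Fin k → ℕ → ℝ := fun i ℓ =>
      (⌈c i ℓ * 10 ^ r⌉ : ℝ) / 10 ^ r +
        (N.factorial : ℝ) / 10 ^ (r + N.factorial * ((i : ℕ) + 1))
    (∀ (S T : Finset (Fin k)), S.Nonempty → T.Nonempty → S ≠ T →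
      ∀ ℓ ℓ' : Fin k → ℕ,
        (∀ i, 1 ≤ ℓ i ∧ ℓ i ≤ N) → (∀ i, 1 ≤ ℓ' i ∧ ℓ' i ≤ N) →
        ∑ i ∈ S, chat i (ℓ i) ≠ ∑ i ∈ T, chat i (ℓ' i)) ∧
    (∀ (i : Fin k) (ℓ : ℕ), 1 ≤ ℓ → ℓ ≤ N →
      chat i ℓ - c i ℓ ≤ 1 / 10 ^ r + (N.factorial : ℝ) / 10 ^ (r + N.factorial)) := by
  intro chat
  set m := N.factorial with hm
  have hm1 : 1 ≤ m := N.factorial_pos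
  have hmb : m < 10 ^ m := Nat.lt_pow_self (by norm_num)
  constructor
  · intro S T hS hT hST ℓ ℓ' hℓ hℓ' heq
    apply hST
    set g : Fin k → ℕ := fun i => k - 1 - (i : ℕ) with hg
    have hginj : Function.Injective g := by
      intro i j hij
      have hi := i.isLt; have hj := j.isLt
      apply Fin.ext
      simp only [hg] at hij
      omega
    -- termwise multiplication by 10^(r+m*k)
    have key : ∀ (i : Fin k) (x : ℕ),
        chat i x * 10 ^ (r + m * k) =
        ((⌈c i x * 10 ^ r⌉ * 10 ^ (m * k) + (m : ℤ) * 10 ^ (m * g i) : ℤ) : ℝ) := by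
      intro i x
      have hik : (i : ℕ) + 1 ≤ k := i.isLt
      have hsum : ((i : ℕ) + 1) + (k - 1 - (i : ℕ)) = k := by omega
      have hexp : (r + m * ((i : ℕ) + 1)) + m * g i = r + m * k := by
        simp only [hg]
        rw [add_assoc, ← Nat.mul_add, hsum]
      have h10r : (10 : ℝ) ^ r ≠ 0 := by positivity
      have h10i : (10 : ℝ) ^ (r + m * ((i : ℕ) + 1)) ≠ 0 := by positivity
      have e1 : (⌈c i x * 10 ^ r⌉ : ℝ) / 10 ^ r * 10 ^ (r + m * k)
          = (⌈c i x * 10 ^ r⌉ : ℝ) * 10 ^ (m * k) := by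
        rw [pow_add, ← mul_assoc, div_mul_cancel₀ _ h10r]
      have e2 : (m : ℝ) / 10 ^ (r + m * ((i : ℕ) + 1)) * 10 ^ (r + m * k)
          = (m : ℝ) * 10 ^ (m * g i) := by
        have hsplit : (10 : ℝ) ^ (r + m * k)
            = 10 ^ (r + m * ((i : ℕ) + 1)) * 10 ^ (m * g i) := by
          rw [← pow_add, hexp]
        rw [hsplit, ← mul_assoc, div_mul_cancel₀ _ h10i]
      simp only [chat]
      push_cast
      simp only [← hm]
      rw [add_mul, e1, e2]
    have heqZ : (∑ i ∈ S, (⌈c i (ℓ i) * 10 ^ r⌉ * 10 ^ (m * k) + (m : ℤ) * 10 ^ (m * g i)))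
        = ∑ i ∈ T, (⌈c i (ℓ' i) * 10 ^ r⌉ * 10 ^ (m * k) + (m : ℤ) * 10 ^ (m * g i)) := by
      have h2 : (∑ i ∈ S, chat i (ℓ i)) * 10 ^ (r + m * k)
          = (∑ i ∈ T, chat i (ℓ' i)) * 10 ^ (r + m * k) := by rw [heq]
      rw [Finset.sum_mul, Finset.sum_mul] at h2
      simp only [key] at h2
      exact_mod_cast h2
    rw [Finset.sum_add_distrib, Finset.sum_add_distrib, ← Finset.sum_mul, ← Finset.sum_mul]
      at heqZ
    set P : ℤ := ∑ i ∈ S, ⌈c i (ℓ i) * 10 ^ r⌉ with hP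
    set Q : ℤ := ∑ i ∈ T, ⌈c i (ℓ' i) * 10 ^ r⌉ with hQ
    -- express tails as naturals over images
    have hX : ∀ U : Finset (Fin k), (∑ i ∈ U, (m : ℤ) * 10 ^ (m * g i))
        = ((∑ j ∈ U.image g, m * (10 ^ m) ^ j : ℕ) : ℤ) := by
      intro U
      rw [Finset.sum_image (fun a _ b _ h => hginj h)]
      push_cast
      exact Finset.sum_congr rfl fun i _ => by rw [← pow_mul]
    have hbound : ∀ U : Finset (Fin k),
        (∑ j ∈ U.image g, m * (10 ^ m) ^ j : ℕ) < (10 ^ m) ^ k := by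
      intro U
      have hsub : U.image g ⊆ Finset.range k := by
        intro j hj
        simp only [Finset.mem_image] at hj
        obtain ⟨i, _, rfl⟩ := hj
        simp only [Finset.mem_range, hg]
        have := i.isLt; omega
      have h1 : (∑ j ∈ U.image g, m * (10 ^ m) ^ j : ℕ)
          ≤ ∑ j ∈ Finset.range k, m * (10 ^ m) ^ j :=
        Finset.sum_le_sum_of_subset hsub
      have h2 : ∑ j ∈ Finset.range k, m * (10 ^ m) ^ j ≤ (10 ^ m) ^ k - 1 :=
        geom_bound _ _ _ (Nat.one_le_pow _ _ (by norm_num)) (by omega)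
      have h3 : 1 ≤ (10 ^ m : ℕ) ^ k := Nat.one_le_pow _ _ (by norm_num)
      omega
    rw [hX S, hX T] at heqZ
    set XN : ℕ := ∑ j ∈ S.image g, m * (10 ^ m) ^ j with hXN
    set YN : ℕ := ∑ j ∈ T.image g, m * (10 ^ m) ^ j with hYN
    have hMcast : (10 : ℤ) ^ (m * k) = (((10 ^ m) ^ k : ℕ) : ℤ) := by
      push_cast; rw [← pow_mul]
    have hXlt : (XN : ℤ) < (((10 ^ m) ^ k : ℕ) : ℤ) := by exact_mod_cast hbound S
    have hYlt : (YN : ℤ) < (((10 ^ m) ^ k : ℕ) : ℤ) := by exact_mod_cast hbound T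
    have hXY : XN = YN := by
      set M : ℤ := (((10 ^ m) ^ k : ℕ) : ℤ) with hM
      rw [hMcast] at heqZ
      have hPQ : (P - Q) * M = (YN : ℤ) - (XN : ℤ) := by ring_nf; linarith [heqZ]
      have hM0 : 0 < M := by positivity
      have hX0 : (0 : ℤ) ≤ XN := Int.natCast_nonneg _
      have hY0 : (0 : ℤ) ≤ YN := Int.natCast_nonneg _
      rcases lt_trichotomy (P - Q) 0 with h | h | h
      · have h1 : P - Q ≤ -1 := by omega
        have h2 : (P - Q) * M ≤ -1 * M := mul_le_mul_of_nonneg_right h1 hM0.le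
        have : (XN : ℤ) = (YN : ℤ) := by linarith
        exact_mod_cast this
      · have : (XN : ℤ) = (YN : ℤ) := by
          rw [h, zero_mul] at hPQ; linarith
        exact_mod_cast this
      · have h1 : 1 ≤ P - Q := by omega
        have h2 : 1 * M ≤ (P - Q) * M := mul_le_mul_of_nonneg_right h1 hM0.le
        have : (XN : ℤ) = (YN : ℤ) := by linarith
        exact_mod_cast this
    have himg : S.image g = T.image g :=
      digit_inj (10 ^ m) m (by omega) hmb _ _ hXY
    exact Finset.image_injective hginj himg
  · intro i ℓ h1 h2
    have hp : (0 : ℝ) < 10 ^ r := by positivity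
    have hceil : (⌈c i ℓ * 10 ^ r⌉ : ℝ) < c i ℓ * 10 ^ r + 1 := Int.ceil_lt_add_one _
    have hA : (⌈c i ℓ * 10 ^ r⌉ : ℝ) / 10 ^ r ≤ c i ℓ + 1 / 10 ^ r := by
      rw [div_le_iff₀ hp, add_mul, div_mul_cancel₀ _ hp.ne']
      linarith
    have hB : (m : ℝ) / 10 ^ (r + m * ((i : ℕ) + 1)) ≤ (m : ℝ) / 10 ^ (r + m) := by
      gcongr
      · norm_num
      · have : m * 1 ≤ m * ((i : ℕ) + 1) := Nat.mul_le_mul_left m (by omega)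
        omega
    simp only [chat]
    linarith
end

section
/- Let s be a Nash equilibrium under the incremental cost-sharing protocol with convex edge costs, and let s* be an optimal assignment such that for every player i and every edge e ∈ s*_i, ℓ_e^{<i}(s) ≤ ℓ_e^{<i}(s*). Then the equilibrium total cost satisfies C(s) ≤ C(s*); i.e., s is optimal. -/
/-- Load of edge `e` under profile `s`. -/
def netLoad {E : Type*} [DecidableEq E] {n : ℕ} (s : Fin n → Finset E) (e : E) : ℕ :=
  (Finset.univ.filter fun i : Fin n => e ∈ s i).card

/-- Load of edge `e` under profile `s` due to players preceding `i`. -/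
def priorLoad {E : Type*} [DecidableEq E] {n : ℕ}
    (s : Fin n → Finset E) (i : Fin n) (e : E) : ℕ :=
  (Finset.univ.filter fun k : Fin n => k < i ∧ e ∈ s k).card

/-- Cost share of player `i` under the incremental cost-sharing protocol. -/
def incShare {E : Type*} [DecidableEq E] {n : ℕ}
    (c : E → ℕ → ℝ) (s : Fin n → Finset E) (i : Fin n) : ℝ :=
  ∑ e ∈ s i, (c e (priorLoad s i e + 1) - c e (priorLoad s i e))

/-- Total cost of profile `s`. -/
def netCost {E : Type*} [Fintype E] [DecidableEq E] {n : ℕ}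
    (c : E → ℕ → ℝ) (s : Fin n → Finset E) : ℝ :=
  ∑ e : E, c e (netLoad s e)

lemma sum_rank {α : Type*} [LinearOrder α] [DecidableEq α] (T : Finset α) (g : ℕ → ℝ) :
    ∑ i ∈ T, g ((T.filter (· < i)).card) = ∑ j ∈ Finset.range T.card, g j := by
  set r : α → ℕ := fun i => (T.filter (· < i)).card with hr
  have hinj : Set.InjOn r T := by
    have hsm : ∀ i ∈ T, ∀ j ∈ T, i < j → r i < r j := by
      intro i hi j hj hij
      apply Finset.card_lt_card
      constructor
      · intro k hk
        rw [Finset.mem_filter] at hk ⊢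
        exact ⟨hk.1, lt_trans hk.2 hij⟩
      · intro hsub
        have : i ∈ T.filter (· < j) := Finset.mem_filter.2 ⟨hi, hij⟩
        have := hsub this
        simp at this
    intro i hi j hj hij
    rcases lt_trichotomy i j with h | h | h
    · exact absurd hij (ne_of_lt (hsm i hi j hj h))
    · exact h
    · exact absurd hij.symm (ne_of_lt (hsm j hj i hi h))
  have himg : T.image r = Finset.range T.card := by
    apply Finset.eq_of_subset_of_card_le
    · intro x hx
      rcases Finset.mem_image.1 hx with ⟨i, hi, rfl⟩
      rw [Finset.mem_range]
      calc r i = (T.filter (· < i)).card := rfl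
        _ ≤ (T.erase i).card := by
            apply Finset.card_le_card
            intro k hk
            rw [Finset.mem_filter] at hk
            exact Finset.mem_erase.2 ⟨ne_of_lt hk.2, hk.1⟩
        _ < T.card := Finset.card_erase_lt_of_mem hi
    · rw [Finset.card_range, Finset.card_image_of_injOn hinj]
  rw [← himg, Finset.sum_image (fun i hi j hj h => hinj hi hj h)]

lemma netCost_eq_sum_incShare {E : Type*} [Fintype E] [DecidableEq E] {n : ℕ}
    (c : E → ℕ → ℝ) (hzero : ∀ e, c e 0 = 0) (s : Fin n → Finset E) :
    netCost c s = ∑ i, incShare c s i := by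
  unfold netCost incShare
  have swap : ∑ i : Fin n, ∑ e ∈ s i, (c e (priorLoad s i e + 1) - c e (priorLoad s i e))
      = ∑ e : E, ∑ i ∈ Finset.univ.filter (fun i : Fin n => e ∈ s i),
          (c e (priorLoad s i e + 1) - c e (priorLoad s i e)) := by
    rw [Finset.sum_comm' (s := Finset.univ) (t := fun i => s i)
      (t' := Finset.univ) (s' := fun e => Finset.univ.filter fun i : Fin n => e ∈ s i)]
    · simp
  rw [swap]
  apply Finset.sum_congr rfl
  intro e _
  set T : Finset (Fin n) := Finset.univ.filter (fun i : Fin n => e ∈ s i) with hT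
  have hpl : ∀ i : Fin n, priorLoad s i e = (T.filter (· < i)).card := by
    intro i
    unfold priorLoad
    rw [hT, Finset.filter_filter]
    congr 1
    ext k
    simp [and_comm]
  have : ∑ i ∈ T, (c e (priorLoad s i e + 1) - c e (priorLoad s i e))
      = ∑ i ∈ T, (fun j => c e (j + 1) - c e j) ((T.filter (· < i)).card) := by
    apply Finset.sum_congr rfl
    intro i _; rw [hpl]
  rw [this, sum_rank T (fun j => c e (j + 1) - c e j), Finset.sum_range_sub (fun j => c e j)]
  rw [hzero e]
  unfold netLoad
  ring_nf
  rfl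

lemma priorLoad_update {E : Type*} [DecidableEq E] {n : ℕ}
    (s : Fin n → Finset E) (i : Fin n) (p : Finset E) (e : E) :
    priorLoad (Function.update s i p) i e = priorLoad s i e := by
  unfold priorLoad
  congr 1
  apply Finset.filter_congr
  intro k _
  constructor
  · rintro ⟨hk, he⟩
    rw [Function.update_of_ne (ne_of_lt hk)] at he
    exact ⟨hk, he⟩
  · rintro ⟨hk, he⟩
    rw [Function.update_of_ne (ne_of_lt hk)]
    exact ⟨hk, he⟩

/-- Under the incremental cost-sharing protocol with convex edge costs, any
Nash equilibrium `s` admitting an optimal profile `s*` with dominated prior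
loads has cost at most the optimal cost, i.e. `s` is optimal. -/
theorem incremental_nash_is_optimal
    {E : Type*} [Fintype E] [DecidableEq E] (n : ℕ)
    (c : E → ℕ → ℝ)
    (hnonneg : ∀ e ℓ, 0 ≤ c e ℓ) (hzero : ∀ e, c e 0 = 0)
    (hmono : ∀ e, Monotone (c e))
    (hconv : ∀ e, Monotone fun ℓ => c e (ℓ + 1) - c e ℓ)
    (Strat : Fin n → Set (Finset E))
    (s sstar : Fin n → Finset E)
    (hs : ∀ i, s i ∈ Strat i) (hsstar : ∀ i, sstar i ∈ Strat i)
    (hNash : ∀ i : Fin n, ∀ p ∈ Strat i,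
      incShare c s i ≤ incShare c (Function.update s i p) i)
    (hdom : ∀ i : Fin n, ∀ e ∈ sstar i, priorLoad s i e ≤ priorLoad sstar i e) :
    netCost c s ≤ netCost c sstar := by
  rw [netCost_eq_sum_incShare c hzero s, netCost_eq_sum_incShare c hzero sstar]
  apply Finset.sum_le_sum
  intro i _
  calc incShare c s i ≤ incShare c (Function.update s i (sstar i)) i :=
        hNash i (sstar i) (hsstar i)
    _ ≤ incShare c sstar i := by
        unfold incShare
        rw [Function.update_self]
        apply Finset.sum_le_sum
        intro e he
        rw [priorLoad_update]
        exact hconv e (le_trans (le_refl _) (hdom i e he))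
end
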